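/- Let D : K → [0,∞] be the unique continuous extension of the distance function, i.e. the continuous map into the compact space [0,∞] (equivalently ℝ≥0∞) with D(ι(x,y)) = d(x,y) for all (x,y) ∈ W. If μ, ν are finite positive Radon Borel measures on K with μ ≼ ν, then μ(D⁻¹{0}) ≤ ν(D⁻¹{0}); consequently, if ν is concentrated on D⁻¹((0,∞]) (i.e. ν(D⁻¹{0}) = 0), then μ is concentrated on D⁻¹((0,∞]) as well. -/

import Mathlib

open MeasureTheory

/-- `Wt M` is the set `W = {(x,y) ∈ M × M : x ≠ y}`, a topological subspace of `M × M`. -/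
abbrev Wt (M : Type*) [MetricSpace M] := {p : M × M // p.1 ≠ p.2}

/-- `g : W → ℝ` satisfies the G-inequality. -/
def GIneq {M : Type*} [MetricSpace M] (g : Wt M → ℝ) : Prop :=
  ∀ (x u y : M) (hxu : x ≠ u) (huy : u ≠ y) (hxy : x ≠ y),
    dist x y * g ⟨(x, y), hxy⟩ ≤ dist x u * g ⟨(x, u), hxu⟩ + dist u y * g ⟨(u, y), huy⟩

/-- The cone `G` of continuous functions on `K = βW` satisfying the G-inequality
on points of `W`. -/
def GSet (M : Type*) [MetricSpace M] : Set (StoneCech (Wt M) → ℝ) :=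
  {g | Continuous g ∧ GIneq fun p => g (stoneCechUnit p)}

/-- The Choquet-like quasi-order `μ ≼ ν`. -/
def Preceq {M : Type*} [MetricSpace M] [MeasurableSpace (StoneCech (Wt M))]
    (μ ν : Measure (StoneCech (Wt M))) : Prop :=
  ∀ g ∈ GSet M, ∫ ζ, g ζ ∂μ ≤ ∫ ζ, g ζ ∂ν

/-- `μ` is `≼`-minimal among finite positive Radon Borel measures. -/
def IsMinimal {M : Type*} [MetricSpace M] [MeasurableSpace (StoneCech (Wt M))]
    (μ : Measure (StoneCech (Wt M))) : Prop :=
  ∀ ν : Measure (StoneCech (Wt M)),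
    IsFiniteMeasure ν → ν.InnerRegular → Preceq ν μ → Preceq μ ν

/-- The auxiliary function `t ↦ min 1 (e/t)` on `[0,∞]`, real-valued. -/
noncomputable def Ffun (e : ℝ) (t : ENNReal) : ℝ := (min 1 (ENNReal.ofReal e / t)).toReal

lemma Ffun_cont (e : ℝ) : Continuous (Ffun e) := by
  have h1 : Continuous fun t : ENNReal => min 1 (ENNReal.ofReal e / t) := by
    apply Continuous.min continuous_const
    exact (ENNReal.continuous_const_mul (by simp)).comp continuous_inv
  exact ENNReal.continuousOn_toReal.comp_continuous h1 fun t => by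
    simp only [Set.mem_setOf_eq]
    exact ne_top_of_le_ne_top ENNReal.one_ne_top (min_le_left _ _)

lemma Ffun_nonneg (e : ℝ) (t : ENNReal) : 0 ≤ Ffun e t := ENNReal.toReal_nonneg

lemma Ffun_le_one (e : ℝ) (t : ENNReal) : Ffun e t ≤ 1 := by
  have : min 1 (ENNReal.ofReal e / t) ≤ 1 := min_le_left _ _
  simpa [Ffun] using ENNReal.toReal_le_of_le_ofReal zero_le_one (by simpa using this)

lemma Ffun_zero (e : ℝ) (he : 0 < e) : Ffun e 0 = 1 := by
  simp [Ffun, ENNReal.div_zero (by simp [ENNReal.ofReal_pos.mpr he, ne_of_gt] : ENNReal.ofReal e ≠ 0)]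

lemma Ffun_ofReal (e : ℝ) (he : 0 < e) (s : ℝ) (hs : 0 < s) :
    Ffun e (ENNReal.ofReal s) = min 1 (e / s) := by
  rw [Ffun, ← ENNReal.ofReal_div_of_pos hs,
    ENNReal.toReal_min ENNReal.one_ne_top ENNReal.ofReal_ne_top, ENNReal.toReal_one,
    ENNReal.toReal_ofReal (div_nonneg he.le hs.le)]

lemma Ffun_mul (e : ℝ) (he : 0 < e) (s : ℝ) (hs : 0 < s) :
    s * Ffun e (ENNReal.ofReal s) = min s e := by
  rw [Ffun_ofReal e he s hs, mul_min_of_nonneg _ _ hs.le, mul_one,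
    mul_div_cancel₀ _ (ne_of_gt hs)]

lemma min_triangle {a b c e : ℝ} (habc : a ≤ b + c) (hb : 0 ≤ b) (hc : 0 ≤ c)
    (he : 0 ≤ e) : min a e ≤ min b e + min c e := by
  rcases le_total e b with h | h
  · have h1 : (0:ℝ) ≤ min c e := le_min hc he
    calc min a e ≤ e := min_le_right _ _
      _ ≤ min b e + min c e := by rw [min_eq_right h]; linarith
  · rcases le_total e c with h' | h'
    · have h1 : (0:ℝ) ≤ min b e := le_min hb he
      calc min a e ≤ e := min_le_right _ _
        _ ≤ min b e + min c e := by rw [min_eq_right h']; linarith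
    · rw [min_eq_left h, min_eq_left h']
      exact le_trans (min_le_left _ _) habc

theorem stmt11 {M : Type*} [MetricSpace M]
    [MeasurableSpace (StoneCech (Wt M))] [BorelSpace (StoneCech (Wt M))]
    (h3 : ∃ x y z : M, x ≠ y ∧ x ≠ z ∧ y ≠ z)
    (D : StoneCech (Wt M) → ENNReal) (hD : Continuous D)
    (hDext : ∀ p : Wt M, D (stoneCechUnit p) = ENNReal.ofReal (dist p.1.1 p.1.2))
    (μ ν : Measure (StoneCech (Wt M)))
    [IsFiniteMeasure μ] [IsFiniteMeasure ν] [μ.InnerRegular] [ν.InnerRegular]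
    (hle : Preceq μ ν) :
    μ (D ⁻¹' {0}) ≤ ν (D ⁻¹' {0}) ∧ (ν (D ⁻¹' {0}) = 0 → μ (D ⁻¹' {0}) = 0) := by
  set S : Set (StoneCech (Wt M)) := D ⁻¹' {0} with hS
  have hSmeas : MeasurableSet S := hD.measurable (measurableSet_singleton 0)
  -- sequence of test functions
  set eseq : ℕ → ℝ := fun n => 1 / (n + 1) with heseq
  have heseq_pos : ∀ n, 0 < eseq n := fun n => by positivity
  set g : ℕ → StoneCech (Wt M) → ℝ := fun n ζ => Ffun (eseq n) (D ζ) with hg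
  have hgcont : ∀ n, Continuous (g n) := fun n => (Ffun_cont _).comp hD
  have hgnonneg : ∀ n ζ, 0 ≤ g n ζ := fun n ζ => Ffun_nonneg _ _
  have hgle : ∀ n ζ, g n ζ ≤ 1 := fun n ζ => Ffun_le_one _ _
  -- each g n belongs to GSet
  have hgG : ∀ n, g n ∈ GSet M := by
    intro n
    refine ⟨hgcont n, ?_⟩
    intro x u y hxu huy hxy
    have hxu' : (0:ℝ) < dist x u := dist_pos.mpr hxu
    have huy' : (0:ℝ) < dist u y := dist_pos.mpr huy
    have hxy' : (0:ℝ) < dist x y := dist_pos.mpr hxy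
    simp only [hg, hDext]
    rw [Ffun_mul _ (heseq_pos n) _ hxy', Ffun_mul _ (heseq_pos n) _ hxu',
      Ffun_mul _ (heseq_pos n) _ huy']
    exact min_triangle (dist_triangle x u y) dist_nonneg dist_nonneg (heseq_pos n).le
  -- pointwise limit
  have hlim : ∀ ζ, Filter.Tendsto (fun n => g n ζ) Filter.atTop
      (nhds (S.indicator (fun _ => (1:ℝ)) ζ)) := by
    intro ζ
    by_cases hζ : ζ ∈ S
    · have hD0 : D ζ = 0 := hζ
      simp only [hg, hD0, Set.indicator_of_mem hζ]
      have : ∀ n, Ffun (eseq n) 0 = 1 := fun n => Ffun_zero _ (heseq_pos n)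
      simpa [this] using tendsto_const_nhds
    · have hD0 : D ζ ≠ 0 := hζ
      rw [Set.indicator_of_notMem hζ]
      rcases eq_or_ne (D ζ) ⊤ with htop | htop
      · have : ∀ n, g n ζ = 0 := by
          intro n
          simp [hg, htop, Ffun, ENNReal.div_top, ENNReal.toReal_min]
        simpa [this] using tendsto_const_nhds
      · -- squeeze: 0 ≤ g n ζ ≤ eseq n / (D ζ).toReal
        have hpos : 0 < (D ζ).toReal := ENNReal.toReal_pos hD0 htop
        have hub : ∀ n, g n ζ ≤ eseq n / (D ζ).toReal := by
          intro n
          have h1 : min 1 (ENNReal.ofReal (eseq n) / D ζ) ≤ ENNReal.ofReal (eseq n) / D ζ :=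
            min_le_right _ _
          have h2 : (min 1 (ENNReal.ofReal (eseq n) / D ζ)).toReal
              ≤ (ENNReal.ofReal (eseq n) / D ζ).toReal := by
            apply ENNReal.toReal_mono _ h1
            exact (ENNReal.div_lt_top ENNReal.ofReal_ne_top hD0).ne
          calc g n ζ ≤ (ENNReal.ofReal (eseq n) / D ζ).toReal := h2
            _ = eseq n / (D ζ).toReal := by
              rw [ENNReal.toReal_div, ENNReal.toReal_ofReal (heseq_pos n).le]
        have htend : Filter.Tendsto (fun n => eseq n / (D ζ).toReal) Filter.atTop (nhds 0) := by
          have : Filter.Tendsto eseq Filter.atTop (nhds 0) := by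
            simpa [heseq] using tendsto_one_div_add_atTop_nhds_zero_nat (𝕜 := ℝ)
          simpa using this.div_const _
        exact squeeze_zero (fun n => hgnonneg n ζ) hub htend
    -- integrability
  have hgint : ∀ n, Integrable (g n) μ ∧ Integrable (g n) ν := by
    intro n
    constructor <;>
      exact (hgcont n).integrable_of_hasCompactSupport
        (HasCompactSupport.of_compactSpace (g n))
  -- dominated convergence on ν
  have hdctν : Filter.Tendsto (fun n => ∫ ζ, g n ζ ∂ν) Filter.atTop
      (nhds (∫ ζ, S.indicator (fun _ => (1:ℝ)) ζ ∂ν)) := by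
    apply tendsto_integral_of_dominated_convergence (fun _ => (1:ℝ))
      (fun n => (hgcont n).aestronglyMeasurable) (integrable_const 1)
    · intro n
      exact Filter.Eventually.of_forall fun ζ => by
        rw [Real.norm_eq_abs, abs_of_nonneg (hgnonneg n ζ)]; exact hgle n ζ
    · exact Filter.Eventually.of_forall hlim
  have hνind : ∫ ζ, S.indicator (fun _ => (1:ℝ)) ζ ∂ν = (ν S).toReal := by
    simpa [measureReal_def, Pi.one_def] using integral_indicator_one (μ := ν) hSmeas
  -- lower bound on μ side
  have hμlb : ∀ n, (μ S).toReal ≤ ∫ ζ, g n ζ ∂μ := by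
    intro n
    have hind : Integrable (S.indicator (fun _ => (1:ℝ))) μ :=
      (integrable_const (1:ℝ)).indicator hSmeas
    have hmono : ∀ ζ, S.indicator (fun _ => (1:ℝ)) ζ ≤ g n ζ := by
      intro ζ
      by_cases hζ : ζ ∈ S
      · rw [Set.indicator_of_mem hζ]
        have hD0 : D ζ = 0 := hζ
        simp [hg, hD0, Ffun_zero _ (heseq_pos n)]
      · rw [Set.indicator_of_notMem hζ]; exact hgnonneg n ζ
    calc (μ S).toReal = ∫ ζ, S.indicator (fun _ => (1:ℝ)) ζ ∂μ := by
          simpa [measureReal_def, Pi.one_def] using (integral_indicator_one (μ := μ) hSmeas).symm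
      _ ≤ ∫ ζ, g n ζ ∂μ := integral_mono hind ((hgint n).1) hmono
  -- combine
  have hkey : (μ S).toReal ≤ (ν S).toReal := by
    rw [← hνind]
    apply ge_of_tendsto hdctν
    exact Filter.Eventually.of_forall fun n => le_trans (hμlb n) (hle (g n) (hgG n))
  have hfin : μ S ≤ ν S :=
    (ENNReal.toReal_le_toReal (measure_ne_top μ S) (measure_ne_top ν S)).mp hkey
  exact ⟨hfin, fun h0 => le_antisymm (h0 ▸ hfin) zero_le⟩
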